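/- Reduction criterion implies one-distillability: let ρ be a state on ℂ^d ⊗ ℂ^d with reduced states ρ_A = Tr_B ρ and ρ_B = Tr_A ρ. If I⊗ρ_B − ρ is not positive semidefinite, or if ρ_A⊗I − ρ is not positive semidefinite, then ρ is one-distillable. -/

import Mathlib

open Matrix Kronecker BigOperators
open scoped ComplexOrder

noncomputable section

/-- `d × d` complex matrices. -/
abbrev Mat (d : ℕ) := Matrix (Fin d) (Fin d) ℂ

/-- Matrices on `ℂ^d ⊗ ℂ^d`, indexed by `Fin d × Fin d`. -/
abbrev Mat2 (d : ℕ) := Matrix (Fin d × Fin d) (Fin d × Fin d) ℂ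

/-- Partial transpose on Bob's system: `(M^{T_B})_{(i,k),(j,l)} = M_{(i,l),(j,k)}`. -/
def ptB {d : ℕ} (M : Mat2 d) : Mat2 d :=
  Matrix.of fun p q => M (p.1, q.2) (q.1, p.2)

/-- Schmidt rank of a vector `ψ : Fin d × Fin d → ℂ`: the rank of the `d × d`
matrix with `(i,j)` entry `ψ (i,j)`. -/
def schmidtRank {d : ℕ} (ψ : Fin d × Fin d → ℂ) : ℕ :=
  (Matrix.of fun i j => ψ (i, j) : Mat d).rank

/-- A state: positive semidefinite with trace one. -/
def IsState {d : ℕ} (ρ : Mat2 d) : Prop := ρ.PosSemidef ∧ ρ.trace = 1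

/-- One-distillability: some Schmidt-rank-≤2 vector has negative expectation on `ρ^{T_B}`. -/
def OneDistillable {d : ℕ} (ρ : Mat2 d) : Prop :=
  ∃ ψ : Fin d × Fin d → ℂ, schmidtRank ψ ≤ 2 ∧
    (star ψ ⬝ᵥ (ptB ρ).mulVec ψ).re < 0

/-- The rank-one matrix `|ψ⟩⟨ψ|`, with entries `ψ x * conj (ψ y)`. -/
def outer {d : ℕ} (ψ : Fin d × Fin d → ℂ) : Mat2 d :=
  Matrix.vecMulVec ψ (star ψ)

/-- The maximally entangled projector `P₊`, `(P₊)_{(i,k),(j,l)} = (1/d)·δ_{ik}·δ_{jl}`. -/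
def Pplus (d : ℕ) : Mat2 d :=
  Matrix.of fun p q =>
    ((if p.1 = p.2 then (1 : ℂ) else 0) * (if q.1 = q.2 then (1 : ℂ) else 0)) / d

/-- The flip operator `V_{(i,k),(j,l)} = δ_{il}·δ_{jk}`. -/
def flipOp (d : ℕ) : Mat2 d :=
  Matrix.of fun p q => if p.1 = q.2 ∧ q.1 = p.2 then (1 : ℂ) else 0

/-- The operator `Z = Σ_i |ii⟩⟨ii|`, `Z_{(i,k),(j,l)} = δ_{ik}·δ_{jl}·δ_{ij}`. -/
def Zop (d : ℕ) : Mat2 d :=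
  Matrix.of fun p q => if p.1 = p.2 ∧ q.1 = q.2 ∧ p.1 = q.1 then (1 : ℂ) else 0

/-- Partial trace over Alice: `(Tr_A M)_{k,l} = Σ_i M_{(i,k),(i,l)}`. -/
def trA {d : ℕ} (M : Mat2 d) : Mat d :=
  Matrix.of fun k l => ∑ i, M (i, k) (i, l)

/-- Alice's reduced state: `(ρ_A)_{i,j} = Σ_k ρ_{(i,k),(j,k)}`. -/
def redA {d : ℕ} (ρ : Mat2 d) : Mat d :=
  Matrix.of fun i j => ∑ k, ρ (i, k) (j, k)

/-- Bob's reduced state: `(ρ_B)_{k,l} = Σ_i ρ_{(i,k),(i,l)}`. -/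
def redB {d : ℕ} (ρ : Mat2 d) : Mat d := trA ρ

/-- `(1 ⊗ Λ)(M)`, acting with `Λ` on Bob's blocks. -/
def idTensor {d : ℕ} (Λ : Mat d → Mat d) (M : Mat2 d) : Mat2 d :=
  Matrix.of fun p q => Λ (Matrix.of fun k l => M (p.1, k) (q.1, l)) p.2 q.2

/-- `(Λ ⊗ 1)(M)`, acting with `Λ` on Alice's blocks. -/
def tensorId {d : ℕ} (Λ : Mat d → Mat d) (M : Mat2 d) : Mat2 d :=
  Matrix.of fun p q => Λ (Matrix.of fun i j => M (i, p.2) (j, q.2)) p.1 q.1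

/-- `(1_k ⊗ Λ)(M)` for `M` indexed by `Fin k × Fin d`. -/
def idTensorK {d : ℕ} (k : ℕ) (Λ : Mat d → Mat d)
    (M : Matrix (Fin k × Fin d) (Fin k × Fin d) ℂ) :
    Matrix (Fin k × Fin d) (Fin k × Fin d) ℂ :=
  Matrix.of fun p q => Λ (Matrix.of fun m n => M (p.1, m) (q.1, n)) p.2 q.2

/-- Two-decomposable maps: `Λ(X) = Σᵢ Vᵢ · Xᵀ · Vᵢ†` with each `Vᵢ` of rank at most 2. -/
def TwoDecomposable {d : ℕ} (Λ : Mat d → Mat d) : Prop :=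
  ∃ (n : ℕ) (V : Fin n → Mat d), (∀ i, (V i).rank ≤ 2) ∧
    ∀ X : Mat d, Λ X = ∑ i, V i * Xᵀ * (V i)ᴴ

/-- The diagonal part of a matrix (off-diagonal entries set to zero). -/
def diagPart {d : ℕ} (X : Mat d) : Mat d := Matrix.diagonal fun i => X i i


namespace ReductionDistill

local notation "cconj" => starRingEnd ℂ

section SumPerm
variable {M' : Type*} [AddCommMonoid M'] {n : Type*} [Fintype n]

lemma sum_swap12 (F : n → n → n → n → M') :
    ∑ i, ∑ j, ∑ a, ∑ e, F i j a e = ∑ j, ∑ i, ∑ a, ∑ e, F i j a e := Finset.sum_comm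

lemma sum_swap23 (F : n → n → n → n → M') :
    ∑ i, ∑ j, ∑ a, ∑ e, F i j a e = ∑ i, ∑ a, ∑ j, ∑ e, F i j a e :=
  Finset.sum_congr rfl fun _ _ => Finset.sum_comm

lemma sum_swap34 (F : n → n → n → n → M') :
    ∑ i, ∑ j, ∑ a, ∑ e, F i j a e = ∑ i, ∑ j, ∑ e, ∑ a, F i j a e :=
  Finset.sum_congr rfl fun _ _ => Finset.sum_congr rfl fun _ _ => Finset.sum_comm

/-- (i,j,a,e) ↦ (a,i,e,j) -/
lemma sum_permA (F : n → n → n → n → M') :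
    ∑ i, ∑ j, ∑ a, ∑ e, F i j a e = ∑ a, ∑ i, ∑ e, ∑ j, F i j a e := by
  rw [sum_swap23]
  rw [sum_swap34 fun x y z w => F x z y w]
  rw [sum_swap12 fun x y z w => F x w y z]

/-- (i,j,b,e) ↦ (i,b,e,j) -/
lemma sum_permB (F : n → n → n → n → M') :
    ∑ i, ∑ j, ∑ b, ∑ e, F i j b e = ∑ i, ∑ b, ∑ e, ∑ j, F i j b e := by
  rw [sum_swap23]
  rw [sum_swap34 fun x y z w => F x z y w]

/-- (i,j,b,e) ↦ (j,e,i,b) -/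
lemma sum_permC (F : n → n → n → n → M') :
    ∑ i, ∑ j, ∑ b, ∑ e, F i j b e = ∑ j, ∑ e, ∑ i, ∑ b, F i j b e := by
  rw [sum_swap12]
  rw [sum_swap34 fun x y z w => F y x z w]
  rw [sum_swap23 fun x y z w => F y x w z]

end SumPerm

lemma quad_im_zero {n : Type*} [Fintype n] {M : Matrix n n ℂ} (hM : M.IsHermitian) (x : n → ℂ) :
    (star x ⬝ᵥ M *ᵥ x).im = 0 := by
  have hent : ∀ p q, (starRingEnd ℂ) (M p q) = M q p := fun p q => by
    simpa [Matrix.conjTranspose_apply] using congrFun (congrFun hM q) p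
  have key : (starRingEnd ℂ) (star x ⬝ᵥ M *ᵥ x) = star x ⬝ᵥ M *ᵥ x := by
    simp only [dotProduct, mulVec, Pi.star_apply, RCLike.star_def, map_sum, _root_.map_mul,
      Finset.mul_sum, Complex.conj_conj]
    rw [Finset.sum_comm]
    refine Finset.sum_congr rfl fun p _ => Finset.sum_congr rfl fun q _ => ?_
    rw [hent]
    ring
  exact Complex.conj_eq_iff_im.mp key

lemma herm1 {d : ℕ} {ρ : Mat2 d} (hH : ρ.IsHermitian) :
    ((1 : Mat d) ⊗ₖ redB ρ - ρ).IsHermitian := by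
  have hent : ∀ p q, (starRingEnd ℂ) (ρ p q) = ρ q p := fun p q => by
    simpa [Matrix.conjTranspose_apply] using congrFun (congrFun hH q) p
  unfold Matrix.IsHermitian
  ext ⟨i, k⟩ ⟨j, l⟩
  simp [Matrix.conjTranspose_apply, Matrix.sub_apply, kroneckerMap_apply, redB, trA,
    Matrix.one_apply, map_sub, _root_.map_mul, map_sum, apply_ite (starRingEnd ℂ), hent, eq_comm]

lemma herm2 {d : ℕ} {ρ : Mat2 d} (hH : ρ.IsHermitian) :
    (redA ρ ⊗ₖ (1 : Mat d) - ρ).IsHermitian := by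
  have hent : ∀ p q, (starRingEnd ℂ) (ρ p q) = ρ q p := fun p q => by
    simpa [Matrix.conjTranspose_apply] using congrFun (congrFun hH q) p
  unfold Matrix.IsHermitian
  ext ⟨i, k⟩ ⟨j, l⟩
  simp [Matrix.conjTranspose_apply, Matrix.sub_apply, kroneckerMap_apply, redA,
    Matrix.one_apply, map_sub, _root_.map_mul, map_sum, apply_ite (starRingEnd ℂ), hent, eq_comm]

/-- Witness family for the `ρ_A ⊗ I` case. -/
def psiA {d : ℕ} (φ : Fin d × Fin d → ℂ) (i j : Fin d) : Fin d × Fin d → ℂ :=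
  fun p => (if p.2 = j then φ (p.1, i) else 0) - (if p.2 = i then φ (p.1, j) else 0)

/-- Witness family for the `I ⊗ ρ_B` case. -/
def psiB {d : ℕ} (φ : Fin d × Fin d → ℂ) (i j : Fin d) : Fin d × Fin d → ℂ :=
  fun p => (if p.1 = j then cconj (φ (i, p.2)) else 0) -
           (if p.1 = i then cconj (φ (j, p.2)) else 0)

lemma rank_colfactor_le {d : ℕ} (u v : Fin d → ℂ) (i j : Fin d) :
    (Matrix.of fun a b => (if b = j then u a else 0) - (if b = i then v a else 0) : Mat d).rank ≤ 2 := by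
  have hfac : (Matrix.of fun a b => (if b = j then u a else 0) - (if b = i then v a else 0) : Mat d)
      = (Matrix.of fun a (t : Fin 2) => if t = 0 then u a else -(v a)) *
        (Matrix.of fun (t : Fin 2) b => if t = 0 then (if b = j then (1:ℂ) else 0)
          else (if b = i then 1 else 0)) := by
    ext a b
    by_cases hbj : b = j <;> by_cases hbi : b = i <;>
      simp [Matrix.mul_apply, Fin.sum_univ_two, hbj, hbi, sub_eq_add_neg] <;>
      split <;> simp
  rw [hfac]
  exact (Matrix.rank_mul_le_right _ _).trans ((Matrix.rank_le_card_height _).trans_eq (Fintype.card_fin 2))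

lemma rank_rowfactor_le {d : ℕ} (u v : Fin d → ℂ) (i j : Fin d) :
    (Matrix.of fun a b => (if a = j then u b else 0) - (if a = i then v b else 0) : Mat d).rank ≤ 2 := by
  have hfac : (Matrix.of fun a b => (if a = j then u b else 0) - (if a = i then v b else 0) : Mat d)
      = (Matrix.of fun a (t : Fin 2) => if t = 0 then (if a = j then (1:ℂ) else 0)
          else (if a = i then 1 else 0)) *
        (Matrix.of fun (t : Fin 2) b => if t = 0 then u b else -(v b)) := by
    ext a b
    by_cases haj : a = j <;> by_cases hai : a = i <;>
      simp [Matrix.mul_apply, Fin.sum_univ_two, haj, hai, sub_eq_add_neg] <;>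
      split <;> simp
  rw [hfac]
  exact (Matrix.rank_mul_le_left _ _).trans ((Matrix.rank_le_card_width _).trans_eq (Fintype.card_fin 2))

lemma schmidtRank_psiA_le {d : ℕ} (φ : Fin d × Fin d → ℂ) (i j : Fin d) :
    schmidtRank (psiA φ i j) ≤ 2 := by
  unfold schmidtRank psiA
  exact rank_colfactor_le (fun a => φ (a, i)) (fun a => φ (a, j)) i j

lemma schmidtRank_psiB_le {d : ℕ} (φ : Fin d × Fin d → ℂ) (i j : Fin d) :
    schmidtRank (psiB φ i j) ≤ 2 := by
  unfold schmidtRank psiB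
  exact rank_rowfactor_le (fun b => cconj (φ (i, b))) (fun b => cconj (φ (j, b))) i j

lemma keyA {d : ℕ} (ρ : Mat2 d) (φ : Fin d × Fin d → ℂ) :
    ∑ i, ∑ j, star (psiA φ i j) ⬝ᵥ (ptB ρ) *ᵥ (psiA φ i j)
      = 2 * (star φ ⬝ᵥ (redA ρ ⊗ₖ (1 : Mat d) - ρ) *ᵥ φ) := by
  have expand : ∀ i j : Fin d, star (psiA φ i j) ⬝ᵥ (ptB ρ) *ᵥ (psiA φ i j)
      = (∑ a, ∑ e, cconj (φ (a, i)) * (ρ (a, j) (e, j) * φ (e, i)))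
      + (∑ a, ∑ e, cconj (φ (a, j)) * (ρ (a, i) (e, i) * φ (e, j)))
      - (∑ a, ∑ e, cconj (φ (a, i)) * (ρ (a, i) (e, j) * φ (e, j)))
      - (∑ a, ∑ e, cconj (φ (a, j)) * (ρ (a, j) (e, i) * φ (e, i))) := by
    intro i j
    simp only [psiA, dotProduct, mulVec, Pi.star_apply, star_sub, apply_ite (starRingEnd ℂ),
      star_zero, RCLike.star_def, ptB, Matrix.of_apply, Fintype.sum_prod_type, sub_mul, mul_sub,
      ite_mul, mul_ite, zero_mul, mul_zero, Finset.sum_sub_distrib, Finset.sum_ite_eq,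
      Finset.sum_ite_eq', Finset.mem_univ, if_true, Finset.mul_sum, Finset.sum_mul]
    ring_nf
    simp only [map_zero, mul_zero, zero_mul, Finset.sum_ite_irrel, Finset.sum_const_zero,
      Finset.sum_ite_eq', Finset.mem_univ, if_true]
    ring_nf
  have hK : star φ ⬝ᵥ (redA ρ ⊗ₖ (1 : Mat d)) *ᵥ φ
      = ∑ a, ∑ i, ∑ e, ∑ j, cconj (φ (a, i)) * (ρ (a, j) (e, j) * φ (e, i)) := by
    simp only [dotProduct, mulVec, Pi.star_apply, RCLike.star_def, kroneckerMap_apply,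
      redA, one_apply, Matrix.of_apply, Fintype.sum_prod_type, mul_ite, mul_one, mul_zero,
      ite_mul, zero_mul, one_mul, Finset.sum_ite_irrel, Finset.sum_const_zero,
      Finset.sum_ite_eq', Finset.sum_ite_eq, Finset.mem_univ, if_true,
      Finset.mul_sum, Finset.sum_mul]
  have hR : star φ ⬝ᵥ ρ *ᵥ φ
      = ∑ a, ∑ i, ∑ e, ∑ j, cconj (φ (a, i)) * (ρ (a, i) (e, j) * φ (e, j)) := by
    simp only [dotProduct, mulVec, Pi.star_apply, RCLike.star_def, Fintype.sum_prod_type,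
      Finset.mul_sum]
  have E1 : ∑ i, ∑ j, ∑ a, ∑ e, cconj (φ (a, i)) * (ρ (a, j) (e, j) * φ (e, i))
      = star φ ⬝ᵥ (redA ρ ⊗ₖ (1 : Mat d)) *ᵥ φ := by
    rw [hK, sum_permA]
  have E2 : ∑ i, ∑ j, ∑ a, ∑ e, cconj (φ (a, j)) * (ρ (a, i) (e, i) * φ (e, j))
      = star φ ⬝ᵥ (redA ρ ⊗ₖ (1 : Mat d)) *ᵥ φ := by
    rw [← E1, sum_swap12]
  have E3 : ∑ i, ∑ j, ∑ a, ∑ e, cconj (φ (a, i)) * (ρ (a, i) (e, j) * φ (e, j))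
      = star φ ⬝ᵥ ρ *ᵥ φ := by
    rw [hR, sum_permA]
  have E4 : ∑ i, ∑ j, ∑ a, ∑ e, cconj (φ (a, j)) * (ρ (a, j) (e, i) * φ (e, i))
      = star φ ⬝ᵥ ρ *ᵥ φ := by
    rw [← E3, sum_swap12]
  simp only [expand, Finset.sum_add_distrib, Finset.sum_sub_distrib]
  rw [E1, E2, E3, E4, Matrix.sub_mulVec, dotProduct_sub]
  ring

lemma keyB {d : ℕ} (ρ : Mat2 d) (φ : Fin d × Fin d → ℂ) :
    ∑ i, ∑ j, star (psiB φ i j) ⬝ᵥ (ptB ρ) *ᵥ (psiB φ i j)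
      = 2 * (star φ ⬝ᵥ ((1 : Mat d) ⊗ₖ redB ρ - ρ) *ᵥ φ) := by
  have expand : ∀ i j : Fin d, star (psiB φ i j) ⬝ᵥ (ptB ρ) *ᵥ (psiB φ i j)
      = (∑ b, ∑ e, φ (i, b) * (ρ (j, e) (j, b) * cconj (φ (i, e))))
      + (∑ b, ∑ e, φ (j, b) * (ρ (i, e) (i, b) * cconj (φ (j, e))))
      - (∑ b, ∑ e, φ (i, b) * (ρ (j, e) (i, b) * cconj (φ (j, e))))
      - (∑ b, ∑ e, φ (j, b) * (ρ (i, e) (j, b) * cconj (φ (i, e)))) := by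
    intro i j
    simp only [psiB, dotProduct, mulVec, Pi.star_apply, star_sub, apply_ite (starRingEnd ℂ),
      star_zero, RCLike.star_def, Complex.conj_conj, ptB, Matrix.of_apply, Fintype.sum_prod_type,
      sub_mul, mul_sub, ite_mul, mul_ite, zero_mul, mul_zero, Finset.sum_sub_distrib,
      Finset.sum_ite_eq, Finset.sum_ite_eq', Finset.mem_univ, if_true, Finset.mul_sum,
      Finset.sum_mul, Finset.sum_ite_irrel, Finset.sum_const_zero, map_zero]
    ring
  have hK : star φ ⬝ᵥ ((1 : Mat d) ⊗ₖ redB ρ) *ᵥ φ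
      = ∑ i, ∑ b, ∑ e, ∑ j, cconj (φ (i, b)) * (ρ (j, b) (j, e) * φ (i, e)) := by
    simp only [dotProduct, mulVec, Pi.star_apply, RCLike.star_def, kroneckerMap_apply,
      redB, trA, one_apply, Matrix.of_apply, Fintype.sum_prod_type, mul_ite, mul_one, mul_zero,
      ite_mul, zero_mul, one_mul, Finset.sum_ite_irrel, Finset.sum_const_zero,
      Finset.sum_ite_eq', Finset.sum_ite_eq, Finset.mem_univ, if_true,
      Finset.mul_sum, Finset.sum_mul]
  have hR : star φ ⬝ᵥ ρ *ᵥ φ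
      = ∑ a, ∑ i, ∑ e, ∑ j, cconj (φ (a, i)) * (ρ (a, i) (e, j) * φ (e, j)) := by
    simp only [dotProduct, mulVec, Pi.star_apply, RCLike.star_def, Fintype.sum_prod_type,
      Finset.mul_sum]
  have F1 : ∑ i, ∑ j, ∑ b, ∑ e, φ (i, b) * (ρ (j, e) (j, b) * cconj (φ (i, e)))
      = star φ ⬝ᵥ ((1 : Mat d) ⊗ₖ redB ρ) *ᵥ φ := by
    rw [hK]
    rw [sum_permB fun i j b e => φ (i, b) * (ρ (j, e) (j, b) * cconj (φ (i, e)))]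
    rw [sum_swap23 fun i b e j => φ (i, b) * (ρ (j, e) (j, b) * cconj (φ (i, e)))]
    exact Finset.sum_congr rfl fun i _ => Finset.sum_congr rfl fun b _ =>
      Finset.sum_congr rfl fun e _ => Finset.sum_congr rfl fun j _ => by ring
  have F2 : ∑ i, ∑ j, ∑ b, ∑ e, φ (j, b) * (ρ (i, e) (i, b) * cconj (φ (j, e)))
      = star φ ⬝ᵥ ((1 : Mat d) ⊗ₖ redB ρ) *ᵥ φ := by
    rw [← F1, sum_swap12]
  have F3 : ∑ i, ∑ j, ∑ b, ∑ e, φ (i, b) * (ρ (j, e) (i, b) * cconj (φ (j, e)))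
      = star φ ⬝ᵥ ρ *ᵥ φ := by
    rw [hR]
    rw [sum_permC fun i j b e => φ (i, b) * (ρ (j, e) (i, b) * cconj (φ (j, e)))]
    exact Finset.sum_congr rfl fun a _ => Finset.sum_congr rfl fun x _ =>
      Finset.sum_congr rfl fun y _ => Finset.sum_congr rfl fun w _ => by ring
  have F4 : ∑ i, ∑ j, ∑ b, ∑ e, φ (j, b) * (ρ (i, e) (j, b) * cconj (φ (i, e)))
      = star φ ⬝ᵥ ρ *ᵥ φ := by
    rw [← F3, sum_swap12]
  simp only [expand, Finset.sum_add_distrib, Finset.sum_sub_distrib]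
  rw [F1, F2, F3, F4, Matrix.sub_mulVec, dotProduct_sub]
  ring

/-- From non-PSD (with Hermitian) extract a vector with negative real quadratic form. -/
lemma exists_neg_vec {n : Type*} [Fintype n] {M : Matrix n n ℂ} (hM : M.IsHermitian)
    (h : ¬ M.PosSemidef) : ∃ x : n → ℂ, (star x ⬝ᵥ M *ᵥ x).re < 0 := by
  have hx : ∃ x, ¬ (0 ≤ star x ⬝ᵥ M *ᵥ x) := by
    by_contra hc
    push_neg at hc
    exact h (Matrix.PosSemidef.of_dotProduct_mulVec_nonneg hM hc)
  obtain ⟨x, hx⟩ := hx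
  refine ⟨x, ?_⟩
  by_contra hge
  push_neg at hge
  exact hx (by
    rw [Complex.le_def]
    exact ⟨by simpa using hge, by simpa using (quad_im_zero hM x).symm⟩)

/-- Extract a single negative term from a negative double sum. -/
lemma exists_neg_term {d : ℕ} (f : Fin d → Fin d → ℂ) (hf : (∑ i, ∑ j, f i j).re < 0) :
    ∃ i j, (f i j).re < 0 := by
  by_contra hc
  push_neg at hc
  have h0 : 0 ≤ (∑ i, ∑ j, f i j).re := by
    rw [Complex.re_sum]
    refine Finset.sum_nonneg fun i _ => ?_
    rw [Complex.re_sum]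
    exact Finset.sum_nonneg fun j _ => hc i j
  linarith

end ReductionDistill

open ReductionDistill in
/-- violation of the reduction criterion implies one-distillability. -/
theorem reduction_criterion_implies_distillable (d : ℕ) (hd : 2 ≤ d)
    (ρ : Mat2 d) (hρ : IsState ρ)
    (h : ¬ ((1 : Mat d) ⊗ₖ redB ρ - ρ).PosSemidef ∨
         ¬ (redA ρ ⊗ₖ (1 : Mat d) - ρ).PosSemidef) :
    OneDistillable ρ := by
  rcases h with h1 | h2
  · -- I ⊗ ρ_B case
    obtain ⟨φ, hφ⟩ := exists_neg_vec (herm1 hρ.1.1) h1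
    have hkey := keyB ρ φ
    have hsum : (∑ i, ∑ j, star (psiB φ i j) ⬝ᵥ (ptB ρ) *ᵥ (psiB φ i j)).re < 0 := by
      rw [hkey]
      simp only [Complex.mul_re]
      norm_num
      linarith
    obtain ⟨i, j, hij⟩ := exists_neg_term _ hsum
    exact ⟨psiB φ i j, schmidtRank_psiB_le φ i j, hij⟩
  · -- ρ_A ⊗ I case
    obtain ⟨φ, hφ⟩ := exists_neg_vec (herm2 hρ.1.1) h2
    have hkey := keyA ρ φ
    have hsum : (∑ i, ∑ j, star (psiA φ i j) ⬝ᵥ (ptB ρ) *ᵥ (psiA φ i j)).re < 0 := by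
      rw [hkey]
      simp only [Complex.mul_re]
      norm_num
      linarith
    obtain ⟨i, j, hij⟩ := exists_neg_term _ hsum
    exact ⟨psiA φ i j, schmidtRank_psiA_le φ i j, hij⟩
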